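/- Let n be odd and suppose that 3 divides ⌈n/2⌉ or 3 divides ⌈n/2⌉ + 1. Let s = s_1…s_{⌈n/2⌉}…s_n ∈ {0,1}^n and let s' be the string obtained from s by flipping the middle bit, i.e., s' = s_1…(1−s_{⌈n/2⌉})…s_n. Then Σ_{i=1}^{⌈n/2⌉} w_i(s) ≡ Σ_{i=1}^{⌈n/2⌉} w_i(s') (mod 3). -/

import Mathlib

/-- The composition of a binary string: the pair (number of 0s, number of 1s).
Here `false` represents the bit 0 and `true` the bit 1. -/
def comp (w : List Bool) : ℕ × ℕ := (w.count false, w.count true)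

/-- The multiset of compositions of all contiguous substrings of `s` of length `l`. -/
def compLen (l : ℕ) (s : List Bool) : Multiset (ℕ × ℕ) :=
  ↑((List.range (s.length + 1 - l)).map fun i => comp ((s.drop i).take l))

/-- The composition multiset `C(s)`: compositions of all contiguous substrings of `s`. -/
def compMS (s : List Bool) : Multiset (ℕ × ℕ) :=
  ↑((List.range s.length).flatMap fun i =>
    (List.range (s.length - i)).map fun j => comp ((s.drop i).take (j + 1)))

/-- A single composition error: one element `(z,w)` of `M` is replaced by a
pair `(z',w')` with the same length `z'+w' = z+w`. -/
def OneErr (M M' : Multiset (ℕ × ℕ)) : Prop :=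
  ∃ z w z' w' : ℕ, (z, w) ∈ M ∧ z + w = z' + w' ∧
    M' = M - {(z, w)} + {(z', w')}

/-- `AtMostErr t M D`: `D` is obtained from `M` by at most `t` composition errors. -/
def AtMostErr : ℕ → Multiset (ℕ × ℕ) → Multiset (ℕ × ℕ) → Prop
  | 0, M, D => M = D
  | t + 1, M, D => M = D ∨ ∃ M', OneErr M M' ∧ AtMostErr t M' D

/-- The sub-multiset of elements (compositions) of length `l`. -/
def lenPart (l : ℕ) (M : Multiset (ℕ × ℕ)) : Multiset (ℕ × ℕ) :=
  M.filter fun p => p.1 + p.2 = l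

/-- `D` is the result of at most `t` *asymmetric* composition errors in `C(s)`,
for a string of length `n`: additionally, for each `1 ≤ i ≤ ⌊n/2⌋`, at most one
of the two sub-multisets of lengths `i` and `n+1-i` is altered. -/
def AsymErr (t n : ℕ) (s : List Bool) (D : Multiset (ℕ × ℕ)) : Prop :=
  AtMostErr t (compMS s) D ∧
  ∀ i, 1 ≤ i → i ≤ n / 2 →
    lenPart i D ≠ compLen i s → lenPart (n + 1 - i) D = compLen (n + 1 - i) s

/-- A Catalan-Bertrand string: every nonempty prefix has strictly more 0s than 1s. -/
def IsCB (w : List Bool) : Prop :=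
  ∀ j, 1 ≤ j → j ≤ w.length → (w.take j).count true < (w.take j).count false

/-- The reconstruction code `S_R(n)` for even `n`: `s_1 = 0`, `s_n = 1`, and the
subsequence of `s` indexed by the positions `i ∈ {1,…,n/2}` with `s_i ≠ s_{n+1-i}`
(in increasing order) is a Catalan-Bertrand string (indices here are 0-based). -/
def SReven (n : ℕ) : Set (List Bool) :=
  { s | s.length = n ∧ s.getD 0 false = false ∧ s.getD (n - 1) false = true ∧
    IsCB (((List.range (n / 2)).filter fun i =>
        s.getD i false != s.getD (n - 1 - i) false).map fun i => s.getD i false) }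

/-- The reconstruction code `S_R(n)`: for odd `n`, obtained from `S_R(n-1)` by
inserting an arbitrary middle bit. -/
def SR (n : ℕ) : Set (List Bool) :=
  if Even n then SReven n
  else { s | ∃ v ∈ SReven (n - 1), ∃ b : Bool,
      s = v.take ((n - 1) / 2) ++ [b] ++ v.drop ((n - 1) / 2) }

/-- The cumulative weight `w_l(s)`: total number of 1s over all length-`l`
contiguous substrings of `s`. -/
def cumW (l : ℕ) (s : List Bool) : ℕ :=
  ∑ i ∈ Finset.range (s.length + 1 - l), ((s.drop i).take l).count true

/-- `σ_i(s) = s_i + s_{n+1-i}` for `1 ≤ i ≤ ⌊n/2⌋`, and `σ_{⌈n/2⌉}(s) = s_{⌈n/2⌉}`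
for odd `n` (1-based indexing in the mathematical description). -/
def sigmaSeq (s : List Bool) (i : ℕ) : ℕ :=
  if 2 * i ≤ s.length then
    (if s.getD (i - 1) false then 1 else 0) +
      (if s.getD (s.length - i) false then 1 else 0)
  else (if s.getD (i - 1) false then 1 else 0)

/-- Let `n` be odd with `3 ∣ ⌈n/2⌉` or `3 ∣ ⌈n/2⌉ + 1`, and let `s'`
be `s` with the middle bit flipped. Then `Σ_{i=1}^{⌈n/2⌉} w_i(s) ≡ Σ_{i=1}^{⌈n/2⌉} w_i(s')
(mod 3)`. -/

lemma take_set_aux {α : Type*} (l : List α) (r i : ℕ) (b : α) (h : r < i) :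
    (l.set r b).take i = (l.take i).set r b := by
  apply List.ext_getElem?
  intro k
  simp only [List.getElem?_take, List.getElem?_set, List.length_take, List.length_set]
  split_ifs <;> simp_all <;> omega

lemma window_set_aux (s : List Bool) (j a i : ℕ) (b : Bool) :
    ((s.set j b).drop a).take i =
      if a ≤ j ∧ j < a + i then ((s.drop a).take i).set (j - a) b
      else ((s.drop a).take i) := by
  rw [List.drop_set]
  by_cases h1 : j < a
  · simp [h1, if_neg (by omega : ¬ (a ≤ j ∧ j < a + i))]
  · rw [if_neg h1]
    by_cases h2 : j - a < i
    · rw [take_set_aux _ _ _ _ h2, if_pos ⟨by omega, by omega⟩]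
    · rw [if_neg (by omega : ¬ (a ≤ j ∧ j < a + i))]
      apply List.ext_getElem?
      intro k
      simp only [List.getElem?_take, List.getElem?_set]
      split_ifs <;> simp_all <;> omega

lemma window_getD_aux (s : List Bool) (j a i : ℕ) (h1 : a ≤ j) (h2 : j < a + i) :
    ((s.drop a).take i).getD (j - a) false = s.getD j false := by
  rw [List.getD_eq_getElem?_getD, List.getD_eq_getElem?_getD,
    List.getElem?_take, if_pos (by omega), List.getElem?_drop,
    Nat.add_sub_cancel' h1]

lemma count_set_true_aux (s : List Bool) (j : ℕ) (hj : j < s.length)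
    (h : s.getD j false = false) :
    (s.set j true).count true = s.count true + 1 := by
  induction s generalizing j with
  | nil => simp at hj
  | cons x xs ih =>
    cases j with
    | zero => simp_all [List.count_cons]
    | succ k =>
      simp only [List.set_cons_succ, List.count_cons]
      rw [ih k (by simpa using hj) (by simpa using h)]
      omega

lemma count_set_false_aux (s : List Bool) (j : ℕ) (hj : j < s.length)
    (h : s.getD j false = true) :
    (s.set j false).count true + 1 = s.count true := by
  induction s generalizing j with
  | nil => simp at hj
  | cons x xs ih =>
    cases j with
    | zero => simp_all [List.count_cons]
    | succ k =>
      simp only [List.set_cons_succ, List.count_cons]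
      rw [← ih k (by simpa using hj) (by simpa using h)]
      omega

lemma cumW_set_true (s : List Bool) (j i : ℕ) (hj : j < s.length)
    (h : s.getD j false = false) :
    cumW i (s.set j true) = cumW i s +
      ((Finset.range (s.length + 1 - i)).filter fun a => a ≤ j ∧ j < a + i).card := by
  unfold cumW
  rw [List.length_set, Finset.card_filter, ← Finset.sum_add_distrib]
  refine Finset.sum_congr rfl fun a _ => ?_
  rw [window_set_aux]
  by_cases hc : a ≤ j ∧ j < a + i
  · rw [if_pos hc, if_pos hc]
    rw [count_set_true_aux _ (j - a)
      (by rw [List.length_take, List.length_drop]; omega)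
      (by rw [window_getD_aux s j a i hc.1 hc.2]; exact h)]
  · rw [if_neg hc, if_neg hc]; omega

lemma cumW_set_false (s : List Bool) (j i : ℕ) (hj : j < s.length)
    (h : s.getD j false = true) :
    cumW i (s.set j false) +
      ((Finset.range (s.length + 1 - i)).filter fun a => a ≤ j ∧ j < a + i).card
      = cumW i s := by
  unfold cumW
  rw [List.length_set, Finset.card_filter, ← Finset.sum_add_distrib]
  refine Finset.sum_congr rfl fun a _ => ?_
  rw [window_set_aux]
  by_cases hc : a ≤ j ∧ j < a + i
  · rw [if_pos hc, if_pos hc]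
    rw [count_set_false_aux _ (j - a)
      (by rw [List.length_take, List.length_drop]; omega)
      (by rw [window_getD_aux s j a i hc.1 hc.2]; exact h)]
  · rw [if_neg hc, if_neg hc]; omega

lemma card_mid_windows (m i : ℕ) (h1 : 1 ≤ i) (h2 : i ≤ m) :
    ((Finset.range (2 * m - 1 + 1 - i)).filter
      fun a => a ≤ m - 1 ∧ m - 1 < a + i).card = i := by
  have : ((Finset.range (2 * m - 1 + 1 - i)).filter
      fun a => a ≤ m - 1 ∧ m - 1 < a + i) = Finset.Ico (m - i) m := by
    ext a
    simp only [Finset.mem_filter, Finset.mem_range, Finset.mem_Ico]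
    omega
  rw [this, Nat.card_Ico]
  omega

lemma sum_Icc_id_aux (m : ℕ) : 2 * (∑ i ∈ Finset.Icc 1 m, i) = m * (m + 1) := by
  induction m with
  | zero => simp
  | succ k ih =>
    rw [Finset.sum_Icc_succ_top (by omega)]
    ring_nf
    ring_nf at ih
    omega

theorem middle_flip_invariant_mod_three (n : ℕ) (hodd : Odd n)
    (h3 : 3 ∣ (n + 1) / 2 ∨ 3 ∣ (n + 1) / 2 + 1)
    (s : List Bool) (hs : s.length = n) :
    (∑ i ∈ Finset.Icc 1 ((n + 1) / 2), cumW i s) % 3 =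
      (∑ i ∈ Finset.Icc 1 ((n + 1) / 2),
        cumW i (s.set ((n - 1) / 2) (! s.getD ((n - 1) / 2) false))) % 3 := by
  have hb := Bool.eq_false_or_eq_true (s.getD ((n - 1) / 2) false)
  obtain ⟨k, hk⟩ := hodd
  have hm : (n + 1) / 2 = k + 1 := by omega
  have hj : (n - 1) / 2 = k := by omega
  have hjlen : (n - 1) / 2 < s.length := by omega
  have hT : 3 ∣ ∑ i ∈ Finset.Icc 1 ((n + 1) / 2), i := by
    have hg := sum_Icc_id_aux ((n + 1) / 2)
    rcases h3 with ⟨c, hc⟩ | ⟨c, hc⟩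
    · have : 2 * (∑ i ∈ Finset.Icc 1 ((n + 1) / 2), i) =
        3 * (c * ((n + 1) / 2 + 1)) := by rw [hg, hc]; ring
      omega
    · have : 2 * (∑ i ∈ Finset.Icc 1 ((n + 1) / 2), i) =
        3 * (((n + 1) / 2) * c) := by rw [hg, hc]; ring
      omega
  have hcard : ∀ i ∈ Finset.Icc 1 ((n + 1) / 2),
      ((Finset.range (s.length + 1 - i)).filter
        fun a => a ≤ (n - 1) / 2 ∧ (n - 1) / 2 < a + i).card = i := by
    intro i hi
    rw [Finset.mem_Icc] at hi
    have h1 : s.length + 1 - i = 2 * (k + 1) - 1 + 1 - i := by omega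
    have h2 : (n - 1) / 2 = k + 1 - 1 := by omega
    rw [h1, h2]
    exact card_mid_windows (k + 1) i hi.1 (by omega)
  rcases hb with hb | hb
  · rw [hb]
    have hsum : ∀ i ∈ Finset.Icc 1 ((n + 1) / 2),
        cumW i (s.set ((n - 1) / 2) (!true)) + i = cumW i s := by
      intro i hi
      rw [show (!true) = false from rfl, ← cumW_set_false s _ i hjlen hb, hcard i hi]
    have key : (∑ i ∈ Finset.Icc 1 ((n + 1) / 2), cumW i (s.set ((n - 1) / 2) (!true)))
        + (∑ i ∈ Finset.Icc 1 ((n + 1) / 2), i)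
        = ∑ i ∈ Finset.Icc 1 ((n + 1) / 2), cumW i s := by
      rw [← Finset.sum_add_distrib]
      exact Finset.sum_congr rfl hsum
    omega
  · rw [hb]
    have hsum : ∀ i ∈ Finset.Icc 1 ((n + 1) / 2),
        cumW i (s.set ((n - 1) / 2) (!false)) = cumW i s + i := by
      intro i hi
      rw [show (!false) = true from rfl, cumW_set_true s _ i hjlen hb, hcard i hi]
    rw [Finset.sum_congr rfl hsum, Finset.sum_add_distrib]
    omega
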